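/- arXiv:2009.06445 — 3 statements merged into one kernel-verified Lean document; each statement's English description precedes it below -/
import Mathlib

section
/- Let T be a perfect tree, ρ a weight on T, T₀ a finite subtree of T, k ∈ ω, and D ⊆ T^k a dense open subset (in the coordinatewise extension order). Then there is a finite subtree T₁ with T₀ ◁_ρ T₁ such that for all distinct terminal nodes σ₀,…,σ_{k−1} of T₀ and all terminal nodes σ'₀,…,σ'_{k−1} of T₁ with σ_l ⊆ σ'_l for each l, the tuple (σ'₀,…,σ'_{k−1}) belongs to D. -/
/-- A tree on `2`: a set of finite binary sequences closed under initial segments. -/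
def IsTree (T : Set (List Bool)) : Prop := ∀ s ∈ T, ∀ t : List Bool, t <+: s → t ∈ T

/-- The restriction `T_s` of `T` to `s`: all nodes of `T` compatible with `s`. -/
def restrict (T : Set (List Bool)) (s : List Bool) : Set (List Bool) :=
  {t ∈ T | t <+: s ∨ s <+: t}

/-- `S ⊆ 2^{<ω}` is fat: there is `m` such that for all `n ≥ m` there are
`s, t ∈ S` with `s(n) = 0` and `t(n) = 1`. -/
def Fat (S : Set (List Bool)) : Prop :=
  ∃ m : ℕ, ∀ n ≥ m, (∃ s ∈ S, s[n]? = some false) ∧ (∃ t ∈ S, t[n]? = some true)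

/-- A perfect tree: a tree in which every node has two incomparable extensions. -/
def PerfectTree (T : Set (List Bool)) : Prop :=
  IsTree T ∧ ∀ t ∈ T, ∃ s₀ ∈ T, ∃ s₁ ∈ T,
    t <+: s₀ ∧ t <+: s₁ ∧ ¬ s₀ <+: s₁ ∧ ¬ s₁ <+: s₀

/-- A splitting tree: a perfect tree `T` on `2` such that every restriction
`T_s` is fat. -/
def SplittingTree (T : Set (List Bool)) : Prop :=
  PerfectTree T ∧ ∀ s ∈ T, Fat (restrict T s)
/-- A weight on a perfect tree `T`: a map `ρ : T × T → [T]^{<ω}` with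
`ρ(s,t) ⊆ T_s ∖ T_t`. -/
def IsWeight (T : Set (List Bool)) (ρ : List Bool → List Bool → Finset (List Bool)) : Prop :=
  ∀ s ∈ T, ∀ t ∈ T, ↑(ρ s t) ⊆ restrict T s \ restrict T t

/-- `S ≤_ρ T`: `S ⊆ T` and there is a dense set of `s₀ ∈ S` admitting an
injective sequence `(s_n)` in `S_{s₀}` with `s₀` as first element and
`ρ(s_n, s_{n+1}) ⊆ S` for all `n`. -/
def LeRho (ρ : List Bool → List Bool → Finset (List Bool)) (T S : Set (List Bool)) : Prop :=
  S ⊆ T ∧ ∀ s ∈ S, ∃ s₀ ∈ S, s <+: s₀ ∧ ∃ f : ℕ → List Bool,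
    Function.Injective f ∧ f 0 = s₀ ∧ (∀ n, f n ∈ restrict S s₀) ∧
    ∀ n, ↑(ρ (f n) (f (n + 1))) ⊆ S
/-- `σ` is a terminal node of `T₀`. -/
def Terminal (T₀ : Set (List Bool)) (σ : List Bool) : Prop :=
  σ ∈ T₀ ∧ ∀ t ∈ T₀, σ <+: t → t = σ

/-- `T₁` properly end-extends `T₀`. -/
def EndExt (T₀ T₁ : Set (List Bool)) : Prop :=
  T₀ ⊂ T₁ ∧ ∀ t ∈ T₁, t ∉ T₀ → ∃ σ, Terminal T₀ σ ∧ σ <+: t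

/-- `T₀ ◁_ρ T₁`: `T₁` end-extends `T₀` and every terminal node `σ` of `T₀` begins
an injective `ρ`-connected path of length `≥ 2` inside `(T₁)_σ` ending at a
terminal node of `T₁`. -/
def TriLt (ρ : List Bool → List Bool → Finset (List Bool))
    (T₀ T₁ : Set (List Bool)) : Prop :=
  EndExt T₀ T₁ ∧ ∀ σ, Terminal T₀ σ →
    ∃ l : List (List Bool), 2 ≤ l.length ∧ l.Nodup ∧
      (∀ s ∈ l, s ∈ restrict T₁ σ) ∧ l.head? = some σ ∧
      (∃ τ, l.getLast? = some τ ∧ Terminal T₁ τ) ∧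
      l.Chain' (fun a b => ↑(ρ a b) ⊆ T₁)

/-- `D ⊆ T^k` is dense open in the coordinatewise extension order. -/
def DenseOpenTuple (k : ℕ) (T : Set (List Bool)) (D : Set (Fin k → List Bool)) : Prop :=
  (∀ σ ∈ D, ∀ l, σ l ∈ T) ∧
  (∀ σ : Fin k → List Bool, (∀ l, σ l ∈ T) → ∃ σ' ∈ D, ∀ l, σ l <+: σ' l) ∧
  (∀ σ ∈ D, ∀ σ' : Fin k → List Bool, (∀ l, σ' l ∈ T) → (∀ l, σ l <+: σ' l) → σ' ∈ D)

lemma st12_comp {a b c : List Bool} (h1 : a <+: c) (h2 : b <+: c) : a <+: b ∨ b <+: a := by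
  rcases le_total a.length b.length with h | h
  · left
    have hb := List.prefix_iff_eq_take.mp h2
    have ha := List.prefix_iff_eq_take.mp h1
    have : a = b.take a.length := by
      rw [hb, List.take_take, min_eq_left h, ← ha]
    exact this ▸ List.take_prefix _ b
  · right
    have hb := List.prefix_iff_eq_take.mp h2
    have ha := List.prefix_iff_eq_take.mp h1
    have : b = a.take b.length := by
      rw [ha, List.take_take, min_eq_left h, ← hb]
    exact this ▸ List.take_prefix _ a

lemma st12_anti {a b : List Bool} (h1 : a <+: b) (h2 : b <+: a) : a = b :=
  h1.eq_of_length (le_antisymm h1.length_le h2.length_le)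

lemma st12_lt_length {a b : List Bool} (h : a <+: b) (hne : a ≠ b) : a.length < b.length :=
  lt_of_le_of_ne h.length_le (fun hl => hne (h.eq_of_length hl))

lemma st12_prefix_finite (g : List Bool) : {x : List Bool | x <+: g}.Finite := by
  apply Set.Finite.ofFinset ((Finset.range (g.length + 1)).image (fun m => g.take m))
  intro x
  simp only [Finset.mem_image, Finset.mem_range, Set.mem_setOf_eq]
  constructor
  · rintro ⟨m, _, rfl⟩; exact List.take_prefix m g
  · intro h
    exact ⟨x.length, by have := h.length_le; omega, (List.prefix_iff_eq_take.mp h).symm⟩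

lemma st12_sx {T : Set (List Bool)} (hT : PerfectTree T) :
    ∀ t, ∃ s, t ∈ T → (s ∈ T ∧ t <+: s ∧ s ≠ t) := by
  intro t
  by_cases ht : t ∈ T
  · obtain ⟨s₀, hs₀, s₁, hs₁, h0, h1, h01, _⟩ := hT.2 t ht
    refine ⟨s₀, fun _ => ⟨hs₀, h0, ?_⟩⟩
    rintro rfl; exact h01 h1
  · exact ⟨t, fun h => absurd h ht⟩

lemma st12_weight {T : Set (List Bool)} {ρ : List Bool → List Bool → Finset (List Bool)}
    (hρ : IsWeight T ρ) {s t z : List Bool} (hs : s ∈ T) (ht : t ∈ T) (hst : s <+: t)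
    (hz : z ∈ ρ s t) : z ∈ T ∧ s <+: z ∧ ¬z <+: t ∧ ¬t <+: z := by
  have h := hρ s hs t ht (Finset.mem_coe.mpr hz)
  obtain ⟨⟨hzT, hcomp⟩, hnot⟩ := h
  have hnotr : ¬(z <+: t ∨ t <+: z) := fun hc => hnot ⟨hzT, hc⟩
  push_neg at hnotr
  refine ⟨hzT, ?_, hnotr.1, hnotr.2⟩
  rcases hcomp with h | h
  · exact absurd (h.trans hst) hnotr.1
  · exact h
lemma st12_core {k : ℕ} {T : Set (List Bool)} {D : Set (Fin k → List Bool)}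
    (hD : DenseOpenTuple k T D) {α : Type} (S : Finset α)
    (Q : List (Fin k → α)) (hQ : ∀ q ∈ Q, (∀ l, q l ∈ S) ∧ Function.Injective q)
    (g₀ : α → List Bool) (h₀ : ∀ a ∈ S, g₀ a ∈ T) :
    ∃ g : α → List Bool, (∀ a, g₀ a <+: g a) ∧ (∀ a ∈ S, g a ∈ T) ∧
      ∀ q ∈ Q, (fun l => g (q l)) ∈ D := by
  classical
  induction Q with
  | nil => exact ⟨g₀, fun a => List.prefix_rfl, h₀, by simp⟩
  | cons q Q ih =>
    obtain ⟨g, hg1, hg2, hg3⟩ := ih (fun q' hq' => hQ q' (List.mem_cons_of_mem _ hq'))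
    obtain ⟨hqS, hqInj⟩ := hQ q List.mem_cons_self
    obtain ⟨τ, hτD, hτext⟩ := hD.2.1 (fun l => g (q l)) (fun l => hg2 _ (hqS l))
    set g' : α → List Bool := fun a => if h : ∃ l, q l = a then τ h.choose else g a with hg'
    have key : ∀ a, ((¬∃ l, q l = a) ∧ g' a = g a) ∨ ∃ l, q l = a ∧ g' a = τ l := by
      intro a
      show ((¬∃ l, q l = a) ∧ (if h : ∃ l, q l = a then τ h.choose else g a) = g a) ∨
        ∃ l, q l = a ∧ (if h : ∃ l, q l = a then τ h.choose else g a) = τ l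
      split
      · next h => exact Or.inr ⟨h.choose, h.choose_spec, rfl⟩
      · next h => exact Or.inl ⟨h, rfl⟩
    have hval : ∀ l, g' (q l) = τ l := by
      intro l
      rcases key (q l) with ⟨h, _⟩ | ⟨l', hl', he⟩
      · exact absurd ⟨l, rfl⟩ h
      · rw [he, hqInj hl']
    have hgrow : ∀ a, g a <+: g' a := by
      intro a
      rcases key a with ⟨_, he⟩ | ⟨l, hl, he⟩
      · rw [he]
      · rw [he, ← hl]; exact hτext l
    have hT' : ∀ a ∈ S, g' a ∈ T := by
      intro a ha
      rcases key a with ⟨_, he⟩ | ⟨l, _, he⟩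
      · rw [he]; exact hg2 a ha
      · rw [he]; exact hD.1 τ hτD l
    refine ⟨g', fun a => (hg1 a).trans (hgrow a), hT', ?_⟩
    intro q' hq'
    rcases List.mem_cons.mp hq' with rfl | hq'
    · have : (fun l => g' (q' l)) = τ := funext hval
      rw [this]; exact hτD
    · exact hD.2.2 _ (hg3 q' hq') _
        (fun l => hT' _ ((hQ q' (List.mem_cons_of_mem _ hq')).1 l))
        (fun l => hgrow (q' l))
lemma st12_grand {k : ℕ} {T : Set (List Bool)} (hT : PerfectTree T)
    {ρ : List Bool → List Bool → Finset (List Bool)} (hρ : IsWeight T ρ)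
    {D : Set (Fin k → List Bool)} (hD : DenseOpenTuple k T D)
    (Λ : Finset (List Bool)) (hΛT : ∀ σ ∈ Λ, σ ∈ T)
    (hΛinc : ∀ σ ∈ Λ, ∀ σ' ∈ Λ, σ <+: σ' → σ = σ') :
    ∀ (d : ℕ) (V : List Bool → List Bool) (J : Finset (List Bool))
      (cv : List Bool → List Bool),
      (∀ σ ∈ Λ, V σ ∈ T ∧ σ <+: V σ) →
      (∀ z ∈ J, ∃ σ ∈ Λ, σ <+: z) →
      (∀ z ∈ J, cv z ∈ T ∧ z <+: cv z) →
      (∀ z ∈ J, ∀ σ ∈ Λ, σ <+: z → ¬z <+: V σ ∧ ¬V σ <+: z) →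
      ∃ (Vs : ℕ → List Bool → List Bool) (cw : List Bool → List Bool),
        (∀ σ, Vs 0 σ = V σ)
        ∧ (∀ σ ∈ Λ, ∀ r, r < d →
            Vs r σ <+: Vs (r+1) σ ∧ Vs r σ ≠ Vs (r+1) σ ∧ Vs (r+1) σ ∈ T)
        ∧ (∀ z ∈ J, cv z <+: cw z ∧ cw z ∈ T)
        ∧ (∀ σ ∈ Λ, ∀ r, r + 1 < d → ∀ z ∈ ρ (Vs r σ) (Vs (r+1) σ),
            z <+: cw z ∧ cw z ∈ T)
        ∧ (∀ r, 1 ≤ r → r ≤ d → ∀ b : Fin k → List Bool, Function.Injective b →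
            (∀ l, b l ∈ Λ) → ∀ F : Fin k → List Bool,
            (∀ l, F l = Vs r (b l)
              ∨ (∃ z, z ∈ J ∧ b l <+: z ∧ F l = cw z)
              ∨ (∃ r', r' + 1 < r ∧ ∃ z ∈ ρ (Vs r' (b l)) (Vs (r'+1) (b l)), F l = cw z)) →
            F ∈ D) := by
  intro d
  induction d with
  | zero =>
    intro V J cv h1 h2 h3 h4
    refine ⟨fun _ => V, cv, fun _ => rfl, ?_, ?_, ?_, ?_⟩
    · intro σ _ r hr; omega
    · exact fun z hz => ⟨List.prefix_rfl, (h3 z hz).1⟩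
    · intro σ _ r hr; omega
    · intro r h1r h0r; omega
  | succ d ih =>
    intro V J cv h1 h2 h3 h4
    classical
    choose sx hsx using st12_sx hT
    set S : Finset (List Bool ⊕ List Bool) := Λ.disjSum J with hS
    have hQall : ∀ q ∈ ((Fintype.piFinset fun _ : Fin k => S).filter
        fun q => Function.Injective q).toList, (∀ l, q l ∈ S) ∧ Function.Injective q := by
      intro q hq
      rw [Finset.mem_toList, Finset.mem_filter, Fintype.mem_piFinset] at hq
      exact hq
    have h₀ : ∀ a ∈ S, Sum.elim V cv a ∈ T := by
      intro a ha
      rw [hS, Finset.mem_disjSum] at ha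
      rcases ha with ⟨σ, hσ, rfl⟩ | ⟨z, hz, rfl⟩
      · exact (h1 σ hσ).1
      · exact (h3 z hz).1
    obtain ⟨g, hGrow, hGT, hGD⟩ := st12_core hD S _ hQall (Sum.elim V cv) h₀
    set V₁ : List Bool → List Bool := fun σ => sx (g (Sum.inl σ)) with hV₁def
    have hgin : ∀ σ ∈ Λ, g (Sum.inl σ) ∈ T := by
      intro σ hσ
      exact hGT _ (Finset.inl_mem_disjSum.mpr hσ)
    have hV₁ : ∀ σ ∈ Λ, V₁ σ ∈ T ∧ g (Sum.inl σ) <+: V₁ σ ∧ V₁ σ ≠ g (Sum.inl σ) :=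
      fun σ hσ => hsx _ (hgin σ hσ)
    have hVV₁ : ∀ σ ∈ Λ, V σ <+: V₁ σ := by
      intro σ hσ
      exact (hGrow (Sum.inl σ)).trans (hV₁ σ hσ).2.1
    have hnew : ∀ σ ∈ Λ, ∀ z ∈ ρ (V σ) (V₁ σ),
        z ∈ T ∧ V σ <+: z ∧ ¬z <+: V₁ σ ∧ ¬V₁ σ <+: z := by
      intro σ hσ z hz
      exact st12_weight hρ (h1 σ hσ).1 (hV₁ σ hσ).1 (hVV₁ σ hσ) hz
    set cvI : List Bool → List Bool := fun z => if z ∈ J then g (Sum.inr z) else z with hcvIdef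
    have hcvIJ : ∀ z ∈ J, cvI z = g (Sum.inr z) := by
      intro z hz
      show (if z ∈ J then g (Sum.inr z) else z) = g (Sum.inr z)
      rw [if_pos hz]
    have hcvIN : ∀ z ∉ J, cvI z = z := by
      intro z hz
      show (if z ∈ J then g (Sum.inr z) else z) = z
      rw [if_neg hz]
    have hcvIpre : ∀ z ∈ J ∪ Λ.biUnion (fun σ => ρ (V σ) (V₁ σ)), cvI z ∈ T ∧ z <+: cvI z := by
      intro z hz
      by_cases hzJ : z ∈ J
      · rw [hcvIJ z hzJ]
        exact ⟨hGT _ (Finset.inr_mem_disjSum.mpr hzJ),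
          (h3 z hzJ).2.trans (hGrow (Sum.inr z))⟩
      · rw [hcvIN z hzJ]
        rcases Finset.mem_union.mp hz with h | h
        · exact absurd h hzJ
        · obtain ⟨σ, hσ, hzρ⟩ := Finset.mem_biUnion.mp h
          exact ⟨(hnew σ hσ z hzρ).1, List.prefix_rfl⟩
    -- recursion hypotheses
    have rh1 : ∀ σ ∈ Λ, V₁ σ ∈ T ∧ σ <+: V₁ σ := by
      intro σ hσ
      exact ⟨(hV₁ σ hσ).1, (h1 σ hσ).2.trans (hVV₁ σ hσ)⟩
    have rh2 : ∀ z ∈ J ∪ Λ.biUnion (fun σ => ρ (V σ) (V₁ σ)), ∃ σ ∈ Λ, σ <+: z := by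
      intro z hz
      rcases Finset.mem_union.mp hz with h | h
      · exact h2 z h
      · obtain ⟨σ, hσ, hzρ⟩ := Finset.mem_biUnion.mp h
        exact ⟨σ, hσ, (h1 σ hσ).2.trans (hnew σ hσ z hzρ).2.1⟩
    have rh4 : ∀ z ∈ J ∪ Λ.biUnion (fun σ => ρ (V σ) (V₁ σ)), ∀ σ ∈ Λ, σ <+: z →
        ¬z <+: V₁ σ ∧ ¬V₁ σ <+: z := by
      intro z hz σ hσ hσz
      rcases Finset.mem_union.mp hz with h | h
      · obtain ⟨hn1, hn2⟩ := h4 z h σ hσ hσz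
        constructor
        · intro hc
          rcases st12_comp hc (hVV₁ σ hσ) with h' | h'
          · exact hn1 h'
          · exact hn2 h'
        · intro hc
          exact hn2 ((hVV₁ σ hσ).trans hc)
      · obtain ⟨σ', hσ', hzρ⟩ := Finset.mem_biUnion.mp h
        have hb : σ' = σ := by
          have hσ'z : σ' <+: z := (h1 σ' hσ').2.trans (hnew σ' hσ' z hzρ).2.1
          rcases st12_comp hσ'z hσz with h' | h'
          · exact hΛinc σ' hσ' σ hσ h'
          · exact (hΛinc σ hσ σ' hσ' h').symm
        subst hb
        exact ⟨(hnew σ' hσ' z hzρ).2.2.1, (hnew σ' hσ' z hzρ).2.2.2⟩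
    obtain ⟨Vs', cw', c1', c2', c3', c4', c5'⟩ :=
      ih V₁ (J ∪ Λ.biUnion (fun σ => ρ (V σ) (V₁ σ))) cvI rh1 rh2 hcvIpre rh4
    refine ⟨fun r => match r with | 0 => V | (r+1) => Vs' r, cw', fun _ => rfl, ?_, ?_, ?_, ?_⟩
    · -- chain
      intro σ hσ r hr
      match r with
      | 0 =>
        refine ⟨?_, ?_, ?_⟩
        · show V σ <+: Vs' 0 σ
          rw [c1' σ]; exact hVV₁ σ hσ
        · show V σ ≠ Vs' 0 σ
          rw [c1' σ]
          intro he
          have h1' : V₁ σ <+: g (Sum.inl σ) := he ▸ hGrow (Sum.inl σ)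
          exact (hV₁ σ hσ).2.2 (st12_anti h1' (hV₁ σ hσ).2.1)
        · show Vs' 0 σ ∈ T
          rw [c1' σ]; exact (hV₁ σ hσ).1
      | (r+1) =>
        exact c2' σ hσ r (by omega)
    · -- old covers
      intro z hz
      refine ⟨(hGrow (Sum.inr z)).trans ?_, (c3' z (Finset.mem_union_left _ hz)).2⟩
      have hpre := (c3' z (Finset.mem_union_left _ hz)).1
      rwa [hcvIJ z hz] at hpre
    · -- junk covers
      intro σ hσ r hr z hz
      match r, hz with
      | 0, hz =>
        have hz' : z ∈ ρ (V σ) (V₁ σ) := by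
          have he : Vs' 0 σ = V₁ σ := c1' σ
          simpa [he] using hz
        have hzJ' : z ∈ J ∪ Λ.biUnion (fun σ => ρ (V σ) (V₁ σ)) :=
          Finset.mem_union_right _ (Finset.mem_biUnion.mpr ⟨σ, hσ, hz'⟩)
        exact ⟨(hcvIpre z hzJ').2.trans (c3' z hzJ').1, (c3' z hzJ').2⟩
      | (r+1), hz =>
        exact c4' σ hσ r (by omega) z hz
    · -- density facts
      intro r h1r hrd b hbinj hbΛ F hF
      match r, h1r, hrd with
      | 1, _, hrd =>
        -- level one: direct from the core lemma
        set q : Fin k → (List Bool ⊕ List Bool) := fun l =>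
          if h : ∃ z, z ∈ J ∧ b l <+: z ∧ F l = cw' z then Sum.inr h.choose
          else Sum.inl (b l) with hqdef
        have qkey : ∀ l, (q l = Sum.inl (b l) ∧ F l = Vs' 0 (b l))
            ∨ (∃ z, z ∈ J ∧ b l <+: z ∧ F l = cw' z ∧ q l = Sum.inr z) := by
          intro l
          simp only [hqdef]
          split
          · next h =>
            exact Or.inr ⟨h.choose, h.choose_spec.1, h.choose_spec.2.1, h.choose_spec.2.2, rfl⟩
          · next h =>
            refine Or.inl ⟨rfl, ?_⟩
            rcases hF l with h' | h' | h'
            · exact h'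
            · exact absurd h' h
            · obtain ⟨r', hr', _⟩ := h'
              omega
        have hqS : ∀ l, q l ∈ S := by
          intro l
          rcases qkey l with ⟨he, _⟩ | ⟨z, hz, _, _, he⟩
          · rw [he]; exact Finset.inl_mem_disjSum.mpr (hbΛ l)
          · rw [he]; exact Finset.inr_mem_disjSum.mpr hz
        have hqInj : Function.Injective q := by
          intro l l' he
          rcases qkey l with ⟨he1, _⟩ | ⟨z, hz, hpz, _, he1⟩ <;>
            rcases qkey l' with ⟨he2, _⟩ | ⟨z', hz', hpz', _, he2⟩
          · apply hbinj
            have hii : (Sum.inl (b l) : List Bool ⊕ List Bool) = Sum.inl (b l') := by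
              rw [← he1, he, he2]
            exact Sum.inl.inj hii
          · rw [he1, he2] at he; exact absurd he (by simp)
          · rw [he1, he2] at he; exact absurd he (by simp)
          · rw [he1, he2] at he
            have hzz : z = z' := Sum.inr.inj he
            subst hzz
            apply hbinj
            rcases st12_comp hpz hpz' with h' | h'
            · exact hΛinc _ (hbΛ l) _ (hbΛ l') h'
            · exact (hΛinc _ (hbΛ l') _ (hbΛ l) h').symm
        have hqQ : q ∈ ((Fintype.piFinset fun _ : Fin k => S).filter
            fun q => Function.Injective q).toList := by
          rw [Finset.mem_toList, Finset.mem_filter, Fintype.mem_piFinset]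
          exact ⟨hqS, hqInj⟩
        have hbase := hGD q hqQ
        apply hD.2.2 _ hbase
        · intro l
          rcases qkey l with ⟨_, he⟩ | ⟨z, hz, _, he, _⟩
          · rw [he, c1' (b l)]; exact (hV₁ _ (hbΛ l)).1
          · rw [he]; exact (c3' z (Finset.mem_union_left _ hz)).2
        · intro l
          rcases qkey l with ⟨he1, he2⟩ | ⟨z, hz, _, he2, he1⟩
          · rw [he1, he2, c1' (b l)]
            exact (hV₁ _ (hbΛ l)).2.1
          · rw [he1, he2]
            have hpre := (c3' z (Finset.mem_union_left _ hz)).1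
            rwa [hcvIJ z hz] at hpre
      | (rr+2), _, hrd =>
        apply c5' (rr+1) (by omega) (by omega) b hbinj hbΛ F
        intro l
        rcases hF l with h' | h' | h'
        · exact Or.inl h'
        · obtain ⟨z, hz, hpz, he⟩ := h'
          exact Or.inr (Or.inl ⟨z, Finset.mem_union_left _ hz, hpz, he⟩)
        · obtain ⟨r', hr', z, hz, he⟩ := h'
          match r', hz with
          | 0, hz =>
            have hz' : z ∈ ρ (V (b l)) (V₁ (b l)) := by
              have hee : Vs' 0 (b l) = V₁ (b l) := c1' (b l)
              simpa [hee] using hz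
            refine Or.inr (Or.inl ⟨z, Finset.mem_union_right _
              (Finset.mem_biUnion.mpr ⟨b l, hbΛ l, hz'⟩), ?_, he⟩)
            exact (h1 (b l) (hbΛ l)).2.trans (hnew (b l) (hbΛ l) z hz').2.1
          | (ss+1), hz =>
            exact Or.inr (Or.inr ⟨ss, by omega, z, hz, he⟩)
/-- Given a perfect tree `T`, a weight `ρ` on `T`, a finite (nonempty) subtree
`T₀` of `T`, and a dense open `D ⊆ T^k`, there is a finite subtree `T₁` with
`T₀ ◁_ρ T₁` such that any tuple of terminal nodes of `T₁` extending pairwise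
distinct terminal nodes of `T₀` lies in `D`. -/
theorem stmt12 (T : Set (List Bool)) (hT : PerfectTree T)
    (ρ : List Bool → List Bool → Finset (List Bool)) (hρ : IsWeight T ρ)
    (T₀ : Set (List Bool)) (hT₀sub : T₀ ⊆ T) (hT₀fin : T₀.Finite)
    (hT₀tree : IsTree T₀) (hT₀ne : T₀.Nonempty)
    (k : ℕ) (D : Set (Fin k → List Bool)) (hD : DenseOpenTuple k T D) :
    ∃ T₁ : Set (List Bool), T₁ ⊆ T ∧ T₁.Finite ∧ IsTree T₁ ∧ TriLt ρ T₀ T₁ ∧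
      ∀ σ σ' : Fin k → List Bool, Function.Injective σ →
        (∀ l, Terminal T₀ (σ l)) → (∀ l, Terminal T₁ (σ' l)) →
        (∀ l, σ l <+: σ' l) → σ' ∈ D := by
  classical
  have hTermFin : {σ | Terminal T₀ σ}.Finite := hT₀fin.subset (fun σ hσ => hσ.1)
  set Λ : Finset (List Bool) := hTermFin.toFinset with hΛdef
  have hΛmem : ∀ σ, σ ∈ Λ ↔ Terminal T₀ σ := fun σ => Set.Finite.mem_toFinset _
  have hΛT : ∀ σ ∈ Λ, σ ∈ T := fun σ hσ => hT₀sub ((hΛmem σ).mp hσ).1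
  have hΛinc : ∀ σ ∈ Λ, ∀ σ' ∈ Λ, σ <+: σ' → σ = σ' := by
    intro σ hσ σ' hσ' hp
    exact (((hΛmem σ).mp hσ).2 σ' ((hΛmem σ').mp hσ').1 hp).symm
  -- a terminal node exists
  have hΛne : ∃ σ, σ ∈ Λ := by
    obtain ⟨x, hx, hmax⟩ := (hT₀fin.toFinset).exists_max_image List.length
      ((Set.Finite.toFinset_nonempty _).mpr hT₀ne)
    refine ⟨x, (hΛmem x).mpr ⟨(Set.Finite.mem_toFinset _).mp hx, ?_⟩⟩
    intro t ht hxt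
    exact (hxt.eq_of_length (le_antisymm hxt.length_le
      (hmax t ((Set.Finite.mem_toFinset _).mpr ht)))).symm
  set n := k + 1 with hn
  obtain ⟨Vs, cw, c1, c2, c3, c4, c5⟩ :=
    st12_grand hT hρ hD Λ hΛT hΛinc n (fun σ => σ) ∅ (fun z => z)
      (fun σ hσ => ⟨hΛT σ hσ, List.prefix_rfl⟩) (by simp) (by simp) (by simp)
  clear c3
  -- basic chain facts
  have hchain : ∀ σ ∈ Λ, ∀ r', r' ≤ n → ∀ r, r ≤ r' → Vs r σ <+: Vs r' σ := by
    intro σ hσ r'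
    induction r' with
    | zero =>
      intro _ r hr
      have : r = 0 := Nat.le_zero.mp hr
      subst this; exact List.prefix_rfl
    | succ m ihm =>
      intro hm r hr
      rcases Nat.eq_or_lt_of_le hr with he | hlt
      · subst he; exact List.prefix_rfl
      · exact (ihm (by omega) r (by omega)).trans (c2 σ hσ m (by omega)).1
  have hVsT : ∀ σ ∈ Λ, ∀ r, r ≤ n → Vs r σ ∈ T := by
    intro σ hσ r hr
    match r with
    | 0 => rw [c1]; exact hΛT σ hσ
    | (m+1) => exact (c2 σ hσ m (by omega)).2.2
  have hlen : ∀ σ ∈ Λ, ∀ r r', r < r' → r' ≤ n → (Vs r σ).length < (Vs r' σ).length := by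
    intro σ hσ r r' h h'
    have h1 := st12_lt_length (c2 σ hσ r (by omega)).1 (c2 σ hσ r (by omega)).2.1
    have h2 := (hchain σ hσ r' h' (r+1) (by omega)).length_le
    omega
  have hσVs : ∀ σ ∈ Λ, ∀ r, r ≤ n → σ <+: Vs r σ := by
    intro σ hσ r hr
    have := hchain σ hσ r hr 0 (Nat.zero_le _)
    rwa [c1] at this
  have hW : ∀ σ ∈ Λ, ∀ r, r < n → ∀ z ∈ ρ (Vs r σ) (Vs (r+1) σ),
      z ∈ T ∧ Vs r σ <+: z ∧ ¬z <+: Vs (r+1) σ ∧ ¬Vs (r+1) σ <+: z := by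
    intro σ hσ r hr z hz
    exact st12_weight hρ (hVsT σ hσ r (by omega)) (hVsT σ hσ (r+1) (by omega))
      (c2 σ hσ r hr).1 hz
  have hcov : ∀ σ ∈ Λ, ∀ r, r + 1 < n → ∀ z ∈ ρ (Vs r σ) (Vs (r+1) σ),
      z <+: cw z ∧ cw z ∈ T := by
    intro σ hσ r hr z hz
    exact c4 σ hσ r hr z hz
  have hbase : ∀ (x σ σ' : List Bool), σ ∈ Λ → σ' ∈ Λ → σ <+: x → σ' <+: x → σ = σ' := by
    intro x σ σ' hσ hσ' h h'
    rcases st12_comp h h' with hc | hc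
    · exact hΛinc σ hσ σ' hσ' hc
    · exact (hΛinc σ' hσ' σ hσ hc).symm
  -- the new tree
  set T₁ : Set (List Bool) := T₀ ∪ {x | ∃ σ ∈ Λ,
      (∃ r, r ≤ n ∧ x <+: Vs r σ)
    ∨ (∃ r, r < n ∧ ∃ z ∈ ρ (Vs r σ) (Vs (r+1) σ), x <+: z)
    ∨ (∃ r, r + 1 < n ∧ ∃ z ∈ ρ (Vs r σ) (Vs (r+1) σ), x <+: cw z)} with hT₁def
  have hmemM : ∀ σ ∈ Λ, ∀ r, r ≤ n → Vs r σ ∈ T₁ :=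
    fun σ hσ r hr => Or.inr ⟨σ, hσ, Or.inl ⟨r, hr, List.prefix_rfl⟩⟩
  have hmemZ : ∀ σ ∈ Λ, ∀ r, r < n → ∀ z ∈ ρ (Vs r σ) (Vs (r+1) σ), z ∈ T₁ :=
    fun σ hσ r hr z hz => Or.inr ⟨σ, hσ, Or.inr (Or.inl ⟨r, hr, z, hz, List.prefix_rfl⟩)⟩
  have hmemC : ∀ σ ∈ Λ, ∀ r, r + 1 < n → ∀ z ∈ ρ (Vs r σ) (Vs (r+1) σ), cw z ∈ T₁ :=
    fun σ hσ r hr z hz => Or.inr ⟨σ, hσ, Or.inr (Or.inr ⟨r, hr, z, hz, List.prefix_rfl⟩)⟩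
  -- T₁ ⊆ T
  have hT₁T : T₁ ⊆ T := by
    rintro x (hx | ⟨σ, hσ, hcase⟩)
    · exact hT₀sub hx
    rcases hcase with ⟨r, hr, hp⟩ | ⟨r, hr, z, hz, hp⟩ | ⟨r, hr, z, hz, hp⟩
    · exact hT.1 _ (hVsT σ hσ r hr) x hp
    · exact hT.1 _ (hW σ hσ r hr z hz).1 x hp
    · exact hT.1 _ (hcov σ hσ r hr z hz).2 x hp
  -- finiteness
  have hT₁fin : T₁.Finite := by
    apply Set.Finite.union hT₀fin
    apply Set.Finite.subset (s := ⋃ σ ∈ (Λ : Set (List Bool)), ⋃ r ∈ Set.Iic n,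
      ({x | x <+: Vs r σ} ∪ ⋃ z ∈ (ρ (Vs r σ) (Vs (r+1) σ) : Set (List Bool)),
        ({x | x <+: z} ∪ {x | x <+: cw z})))
    · apply Set.Finite.biUnion Λ.finite_toSet
      intro σ _
      apply Set.Finite.biUnion (Set.finite_Iic n)
      intro r _
      apply Set.Finite.union (st12_prefix_finite _)
      apply Set.Finite.biUnion (ρ _ _).finite_toSet
      intro z _
      exact (st12_prefix_finite z).union (st12_prefix_finite (cw z))
    · rintro x ⟨σ, hσ, hcase⟩
      rcases hcase with ⟨r, hr, hp⟩ | ⟨r, hr, z, hz, hp⟩ | ⟨r, hr, z, hz, hp⟩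
      · exact Set.mem_biUnion hσ (Set.mem_biUnion (Set.mem_Iic.mpr hr) (Or.inl hp))
      · exact Set.mem_biUnion hσ (Set.mem_biUnion (Set.mem_Iic.mpr (le_of_lt hr))
          (Or.inr (Set.mem_biUnion (Finset.mem_coe.mpr hz) (Or.inl hp))))
      · exact Set.mem_biUnion hσ (Set.mem_biUnion (Set.mem_Iic.mpr (by omega))
          (Or.inr (Set.mem_biUnion (Finset.mem_coe.mpr hz) (Or.inr hp))))
  -- tree
  have hT₁tree : IsTree T₁ := by
    rintro s (hs | ⟨σ, hσ, hcase⟩) t ht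
    · exact Or.inl (hT₀tree s hs t ht)
    rcases hcase with ⟨r, hr, hp⟩ | ⟨r, hr, z, hz, hp⟩ | ⟨r, hr, z, hz, hp⟩
    · exact Or.inr ⟨σ, hσ, Or.inl ⟨r, hr, ht.trans hp⟩⟩
    · exact Or.inr ⟨σ, hσ, Or.inr (Or.inl ⟨r, hr, z, hz, ht.trans hp⟩)⟩
    · exact Or.inr ⟨σ, hσ, Or.inr (Or.inr ⟨r, hr, z, hz, ht.trans hp⟩)⟩
  -- every new node extends a terminal
  have hEndB : ∀ x ∈ T₁, x ∉ T₀ → ∃ σ ∈ Λ, σ <+: x := by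
    rintro x (hx | ⟨σ, hσ, hcase⟩) hx0
    · contradiction
    refine ⟨σ, hσ, ?_⟩
    have hcomp : σ <+: x ∨ x <+: σ := by
      rcases hcase with ⟨r, hr, hp⟩ | ⟨r, hr, z, hz, hp⟩ | ⟨r, hr, z, hz, hp⟩
      · exact st12_comp (hσVs σ hσ r hr) hp
      · exact st12_comp ((hσVs σ hσ r (by omega)).trans (hW σ hσ r hr z hz).2.1) hp
      · exact st12_comp (((hσVs σ hσ r (by omega)).trans
          (hW σ hσ r (by omega) z hz).2.1).trans (hcov σ hσ r hr z hz).1) hp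
    rcases hcomp with h | h
    · exact h
    · exact absurd (hT₀tree σ ((hΛmem σ).mp hσ).1 x h) hx0
  -- tips are terminal in T₁
  have htip : ∀ σ ∈ Λ, Terminal T₁ (Vs n σ) := by
    intro σ hσ
    refine ⟨hmemM σ hσ n le_rfl, ?_⟩
    rintro x (hx0 | ⟨σ', hσ', hcase⟩) hpx
    · exfalso
      have hσx : σ <+: x := (hσVs σ hσ n le_rfl).trans hpx
      have hxeq : x = σ := ((hΛmem σ).mp hσ).2 x hx0 hσx
      have h1 : (Vs 0 σ).length < (Vs n σ).length := hlen σ hσ 0 n (by omega) le_rfl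
      rw [c1 σ] at h1
      have h2 := hpx.length_le
      rw [hxeq] at h2
      omega
    · have hσx : σ <+: x := (hσVs σ hσ n le_rfl).trans hpx
      rcases hcase with ⟨r, hr, hp⟩ | ⟨r, hr, z, hz, hp⟩ | ⟨r, hr, z, hz, hp⟩
      · have hb : σ' = σ :=
          hbase (Vs r σ') σ' σ hσ' hσ (hσVs σ' hσ' r hr) (hσx.trans hp)
        subst hb
        have hrn : r = n := by
          by_contra hne
          have hl := hlen σ' hσ r n (by omega) le_rfl
          have := (hpx.trans hp).length_le
          omega
        subst hrn
        exact st12_anti hp hpx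
      · exfalso
        have hσ'z : σ' <+: z := (hσVs σ' hσ' r (by omega)).trans (hW σ' hσ' r hr z hz).2.1
        have hb : σ' = σ := hbase z σ' σ hσ' hσ hσ'z ((hσx.trans hp))
        subst hb
        exact (hW σ' hσ' r hr z hz).2.2.2
          ((hchain σ' hσ' n le_rfl (r+1) (by omega)).trans (hpx.trans hp))
      · exfalso
        have hσ'cw : σ' <+: cw z := ((hσVs σ' hσ' r (by omega)).trans
          (hW σ' hσ' r (by omega) z hz).2.1).trans (hcov σ' hσ' r hr z hz).1
        have hb : σ' = σ := hbase (cw z) σ' σ hσ' hσ hσ'cw ((hσx.trans hp))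
        subst hb
        have hzcw : z <+: cw z := (hcov σ' hσ' r hr z hz).1
        have hVncw : Vs n σ' <+: cw z := hpx.trans hp
        rcases st12_comp hzcw hVncw with h | h
        · rcases st12_comp h (hchain σ' hσ' n le_rfl (r+1) (by omega)) with h' | h'
          · exact (hW σ' hσ' r (by omega) z hz).2.2.1 h'
          · exact (hW σ' hσ' r (by omega) z hz).2.2.2 h'
        · exact (hW σ' hσ' r (by omega) z hz).2.2.2
            ((hchain σ' hσ' n le_rfl (r+1) (by omega)).trans h)
    -- TriLt
  have hTri : TriLt ρ T₀ T₁ := by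
    constructor
    · constructor
      · refine ⟨Set.subset_union_left, ?_⟩
        obtain ⟨σ0, hσ0⟩ := hΛne
        intro hsub
        have h1 : Vs 1 σ0 ∈ T₀ := hsub (hmemM σ0 hσ0 1 (by omega))
        have h2 : Vs 1 σ0 = σ0 := ((hΛmem σ0).mp hσ0).2 _ h1 (hσVs σ0 hσ0 1 (by omega))
        have h3 : (Vs 0 σ0).length < (Vs 1 σ0).length := hlen σ0 hσ0 0 1 (by omega) (by omega)
        rw [c1, h2] at h3
        omega
      · intro t ht ht0
        obtain ⟨σ, hσ, hp⟩ := hEndB t ht ht0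
        exact ⟨σ, (hΛmem σ).mp hσ, hp⟩
    · intro σ hσterm
      have hσ : σ ∈ Λ := (hΛmem σ).mpr hσterm
      refine ⟨List.ofFn (fun i : Fin (n+1) => Vs i σ), ?_, ?_, ?_, ?_, ?_, ?_⟩
      · rw [List.length_ofFn]; omega
      · rw [List.nodup_ofFn]
        intro i j hij
        by_contra hne
        have hij' : Vs (i : ℕ) σ = Vs (j : ℕ) σ := hij
        rcases Fin.lt_or_lt_of_ne hne with h | h
        · have := hlen σ hσ i j h (Nat.lt_succ_iff.mp j.isLt)
          rw [hij'] at this; omega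
        · have := hlen σ hσ j i h (Nat.lt_succ_iff.mp i.isLt)
          rw [hij'] at this; omega
      · intro s hs
        rw [List.mem_ofFn] at hs
        obtain ⟨i, rfl⟩ := hs
        exact ⟨hmemM σ hσ i (Nat.lt_succ_iff.mp i.isLt),
          Or.inr (hσVs σ hσ i (Nat.lt_succ_iff.mp i.isLt))⟩
      · rw [List.ofFn_succ]
        show some (Vs (0 : Fin (n+1)) σ) = some σ
        rw [Fin.val_zero, c1]
      · refine ⟨Vs n σ, ?_, htip σ hσ⟩
        have hne : List.ofFn (fun i : Fin (n+1) => Vs i σ) ≠ [] := by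
          simp [List.ofFn_eq_nil_iff]
        rw [List.getLast?_eq_getLast_of_ne_nil hne, List.getLast_ofFn]
        simp
      · simp only [List.Chain']; rw [List.isChain_ofFn]
        intro i hi
        intro z hz
        simp only [Finset.mem_coe] at hz
        exact hmemZ σ hσ i (by omega) z hz
    -- classification of terminal nodes of T₁ above a terminal of T₀
  have hclass : ∀ (β x : List Bool), β ∈ Λ → Terminal T₁ x → β <+: x →
      ∃ m : ℕ, ∀ lev, 1 ≤ lev → lev ≤ n → lev ≠ m →
        ∃ y, y <+: x ∧ (y = Vs lev β ∨
          ∃ r', r' + 1 < lev ∧ ∃ z ∈ ρ (Vs r' β) (Vs (r'+1) β), y = cw z) := by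
    intro β x hβ hxterm hβx
    rcases hxterm.1 with hx0 | ⟨σ', hσ', hcase⟩
    · exfalso
      have hxeq : x = β := ((hΛmem β).mp hβ).2 x hx0 hβx
      have hpre : x <+: Vs 1 β := by rw [hxeq]; exact hσVs β hβ 1 (by omega)
      have h1 := hxterm.2 (Vs 1 β) (hmemM β hβ 1 (by omega)) hpre
      have h2 : (Vs 0 β).length < (Vs 1 β).length := hlen β hβ 0 1 (by omega) (by omega)
      rw [h1, hxeq, c1] at h2
      omega
    · rcases hcase with ⟨r, hr, hp⟩ | ⟨r, hr, z, hz, hp⟩ | ⟨r, hr, z, hz, hp⟩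
      · -- x is a node of the spine; must be the tip
        have hxg : Vs r σ' = x := hxterm.2 _ (hmemM σ' hσ' r hr) hp
        have hb : σ' = β := hbase x σ' β hσ' hβ (hxg ▸ hσVs σ' hσ' r hr) hβx
        subst hb
        have hrn : r = n := by
          by_contra hne
          have h1 := hxterm.2 (Vs n σ') (hmemM σ' hσ' n le_rfl)
            (hxg ▸ hchain σ' hσ' n le_rfl r hr)
          have h2 := hlen σ' hσ' r n (by omega) le_rfl
          rw [h1, hxg] at h2
          omega
        subst hrn
        refine ⟨0, fun lev h1 h2 _ => ⟨Vs lev σ', ?_, Or.inl rfl⟩⟩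
        rw [← hxg]
        exact hchain σ' hσ' n le_rfl lev h2
      · -- x is a junk node
        have hzT₁ : z ∈ T₁ := hmemZ σ' hσ' r hr z hz
        have hxz : z = x := hxterm.2 z hzT₁ hp
        have hσ'x : σ' <+: x := hxz ▸ ((hσVs σ' hσ' r (by omega)).trans (hW σ' hσ' r hr z hz).2.1)
        have hb : σ' = β := hbase x σ' β hσ' hβ hσ'x hβx
        subst hb
        by_cases hrn : r + 1 < n
        · -- covered junk: x = cw z as well
          have hxcw : cw z = x := hxterm.2 (cw z) (hmemC σ' hσ' r hrn z hz)
            (by rw [← hxz]; exact (hcov σ' hσ' r hrn z hz).1)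
          refine ⟨r+1, fun lev h1 h2 hne => ?_⟩
          rcases Nat.lt_or_ge lev (r+1) with hl | hl
          · refine ⟨Vs lev σ', ?_, Or.inl rfl⟩
            rw [← hxz]
            exact (hchain σ' hσ' r (by omega) lev (by omega)).trans
              (hW σ' hσ' r hr z hz).2.1
          · refine ⟨cw z, ?_, Or.inr ⟨r, by omega, z, hz, rfl⟩⟩
            rw [hxcw]
        · -- uncovered junk of the last link
          refine ⟨n, fun lev h1 h2 hne => ?_⟩
          refine ⟨Vs lev σ', ?_, Or.inl rfl⟩
          rw [← hxz]
          exact (hchain σ' hσ' r (by omega) lev (by omega)).trans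
            (hW σ' hσ' r hr z hz).2.1
      · -- x is a cover node
        have hxcw : cw z = x := hxterm.2 (cw z) (hmemC σ' hσ' r hr z hz) hp
        have hσ'x : σ' <+: x := hxcw ▸ (((hσVs σ' hσ' r (by omega)).trans
          (hW σ' hσ' r (by omega) z hz).2.1).trans (hcov σ' hσ' r hr z hz).1)
        have hb : σ' = β := hbase x σ' β hσ' hβ hσ'x hβx
        subst hb
        refine ⟨r+1, fun lev h1 h2 hne => ?_⟩
        rcases Nat.lt_or_ge lev (r+1) with hl | hl
        · refine ⟨Vs lev σ', ?_, Or.inl rfl⟩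
          rw [← hxcw]
          exact ((hchain σ' hσ' r (by omega) lev (by omega)).trans
            (hW σ' hσ' r (by omega) z hz).2.1).trans (hcov σ' hσ' r hr z hz).1
        · refine ⟨cw z, ?_, Or.inr ⟨r, by omega, z, hz, rfl⟩⟩
          rw [hxcw]
  refine ⟨T₁, hT₁T, hT₁fin, hT₁tree, hTri, ?_⟩
  intro b σ' hinj hterm0 hterm1 hext
  have hbΛ : ∀ l, b l ∈ Λ := fun l => (hΛmem _).mpr (hterm0 l)
  choose m hm using fun l => hclass (b l) (σ' l) (hbΛ l) (hterm1 l) (hext l)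
  obtain ⟨lev, hlev1, hlev2, hlev3⟩ : ∃ lev, 1 ≤ lev ∧ lev ≤ n ∧ ∀ l, lev ≠ m l := by
    have hcard : (Finset.Icc 1 n \ Finset.image m Finset.univ).Nonempty := by
      rw [← Finset.card_pos]
      have h1 : (Finset.Icc 1 n).card = n := by rw [Nat.card_Icc]; omega
      have h2 : (Finset.image m Finset.univ).card ≤ k :=
        le_trans Finset.card_image_le (by simp)
      have h3 := Finset.le_card_sdiff (Finset.image m Finset.univ) (Finset.Icc 1 n)
      omega
    obtain ⟨lev, hlev⟩ := hcard
    rw [Finset.mem_sdiff, Finset.mem_Icc] at hlev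
    refine ⟨lev, hlev.1.1, hlev.1.2, fun l he => ?_⟩
    exact hlev.2 (Finset.mem_image.mpr ⟨l, Finset.mem_univ l, he.symm⟩)
  choose y hy1 hy2 using fun l => hm l lev hlev1 hlev2 (hlev3 l)
  have hyD : y ∈ D := by
    apply c5 lev hlev1 hlev2 b hinj hbΛ y
    intro l
    rcases hy2 l with h | ⟨r', hr', z, hz, he⟩
    · exact Or.inl h
    · exact Or.inr (Or.inr ⟨r', hr', z, hz, he⟩)
  exact hD.2.2 y hyD σ' (fun l => hT₁T (hterm1 l).1) hy1
end

section
/- For any g ∈ {−1,0,1}^k and any open set O ⊆ (2^ω)^k, the set X = {x̄ ∈ (2^ω)^k : ∃ȳ ∈ O, x̄ R̃_g ȳ} is Borel. -/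
/-- The lexicographic (strict) order on Cantor space `2^ω`. -/
def lexLt (x y : ℕ → Bool) : Prop :=
  ∃ n : ℕ, (∀ m < n, x m = y m) ∧ x n < y n

/-- The relation `R̃_g` on `(2^ω)^k` for `g ∈ {−1,0,1}^k`, defined coordinatewise
via the lexicographic order. -/
def Rtil {k : ℕ} (g : Fin k → SignType) (x y : Fin k → ℕ → Bool) : Prop :=
  ∀ l : Fin k, match g l with
    | SignType.neg => lexLt (x l) (y l)
    | SignType.zero => x l = y l
    | SignType.pos => lexLt (y l) (x l)

/-! ### Auxiliary definitions -/

/-- The one-coordinate relation. -/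
def Rel1 (t : SignType) (u z : ℕ → Bool) : Prop :=
  match t with
  | SignType.neg => lexLt u z
  | SignType.zero => u = z
  | SignType.pos => lexLt z u

lemma Rtil_iff {k : ℕ} (g : Fin k → SignType) (x y : Fin k → ℕ → Bool) :
    Rtil g x y ↔ ∀ l, Rel1 (g l) (x l) (y l) := Iff.rfl

/-- Basic cylinder in Cantor space. -/
def cyl (s : List Bool) : Set (ℕ → Bool) := {z | ∀ i < s.length, z i = s.getD i false}

/-- The extension of a finite string by the constant `b`. -/
def extb (s : List Bool) (b : Bool) : ℕ → Bool :=
  fun n => if n < s.length then s.getD n false else b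

lemma extb_mem (s : List Bool) (b : Bool) : extb s b ∈ cyl s := by
  intro i hi; simp [extb, hi]

lemma lexLt_trans {x y z : ℕ → Bool} (h1 : lexLt x y) (h2 : lexLt y z) : lexLt x z := by
  obtain ⟨n, hn, hxn⟩ := h1
  obtain ⟨m, hm, hym⟩ := h2
  rcases lt_trichotomy n m with h | h | h
  · exact ⟨n, fun i hi => (hn i hi).trans (hm i (hi.trans h)), hm n h ▸ hxn⟩
  · subst h; exact ⟨n, fun i hi => (hn i hi).trans (hm i hi), lt_trans hxn hym⟩
  · exact ⟨m, fun i hi => (hn i (hi.trans h)).trans (hm i hi), lt_of_eq_of_lt (hn m h) hym⟩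

lemma le_ext_true {s : List Bool} {z : ℕ → Bool} (hz : z ∈ cyl s) :
    z = extb s true ∨ lexLt z (extb s true) := by
  by_cases h : z = extb s true
  · exact Or.inl h
  right
  have hne : ∃ n, z n ≠ extb s true n := by
    by_contra h'
    push_neg at h'
    exact h (funext h')
  classical
  refine ⟨Nat.find hne, fun m hm => of_not_not (Nat.find_min hne hm), ?_⟩
  have hspec := Nat.find_spec hne
  set n := Nat.find hne
  have hlen : ¬ n < s.length := by
    intro hl
    exact hspec (by simp [extb, hl, hz n hl])
  have h1 : extb s true n = true := by simp [extb, hlen]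
  have h0 : z n = false := by
    rw [h1] at hspec
    simpa using hspec
  rw [h0, h1]
  exact Bool.false_lt_true

lemma ext_false_le {s : List Bool} {z : ℕ → Bool} (hz : z ∈ cyl s) :
    z = extb s false ∨ lexLt (extb s false) z := by
  by_cases h : z = extb s false
  · exact Or.inl h
  right
  have hne : ∃ n, extb s false n ≠ z n := by
    by_contra h'
    push_neg at h'
    exact h (funext fun n => (h' n).symm)
  classical
  refine ⟨Nat.find hne, fun m hm => of_not_not (Nat.find_min hne hm), ?_⟩
  have hspec := Nat.find_spec hne
  set n := Nat.find hne
  have hlen : ¬ n < s.length := by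
    intro hl
    exact hspec (by simp [extb, hl, hz n hl])
  have h1 : extb s false n = false := by simp [extb, hlen]
  have h0 : z n = true := by
    rw [h1] at hspec
    simpa using (Ne.symm hspec)
  rw [h0, h1]
  exact Bool.false_lt_true

/-- The set of `u` related to some element of the cylinder `cyl s` by `Rel1 t`. -/
def Aset (t : SignType) (s : List Bool) : Set (ℕ → Bool) :=
  match t with
  | SignType.neg => {u | lexLt u (extb s true)}
  | SignType.zero => cyl s
  | SignType.pos => {u | lexLt (extb s false) u}

lemma mem_Aset_iff (t : SignType) (s : List Bool) (u : ℕ → Bool) :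
    u ∈ Aset t s ↔ ∃ z ∈ cyl s, Rel1 t u z := by
  cases t with
  | neg =>
    constructor
    · intro hu; exact ⟨extb s true, extb_mem s true, hu⟩
    · rintro ⟨z, hz, hrel⟩
      show lexLt u (extb s true)
      rcases le_ext_true hz with h | h
      · exact h ▸ hrel
      · exact lexLt_trans hrel h
  | zero =>
    constructor
    · intro hu; exact ⟨u, hu, rfl⟩
    · rintro ⟨z, hz, rfl⟩; exact hz
  | pos =>
    constructor
    · intro hu; exact ⟨extb s false, extb_mem s false, hu⟩
    · rintro ⟨z, hz, hrel⟩
      show lexLt (extb s false) u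
      rcases ext_false_le hz with h | h
      · exact h ▸ hrel
      · exact lexLt_trans h hrel

lemma measurableSet_lexLt_left (a : ℕ → Bool) : MeasurableSet {u : ℕ → Bool | lexLt u a} := by
  have : {u : ℕ → Bool | lexLt u a} =
      ⋃ n, ((⋂ m, ⋂ (_ : m < n), (fun u : ℕ → Bool => u m) ⁻¹' {a m}) ∩
        (fun u : ℕ → Bool => u n) ⁻¹' {b | b < a n}) := by
    ext u
    simp [lexLt]
  rw [this]
  refine MeasurableSet.iUnion fun n => MeasurableSet.inter ?_ ?_
  · exact MeasurableSet.iInter fun m => MeasurableSet.iInter fun _ =>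
      measurable_pi_apply m (measurableSet_singleton _)
  · exact measurable_pi_apply n ((Set.toFinite _).measurableSet)

lemma measurableSet_lexLt_right (a : ℕ → Bool) : MeasurableSet {u : ℕ → Bool | lexLt a u} := by
  have : {u : ℕ → Bool | lexLt a u} =
      ⋃ n, ((⋂ m, ⋂ (_ : m < n), (fun u : ℕ → Bool => u m) ⁻¹' {a m}) ∩
        (fun u : ℕ → Bool => u n) ⁻¹' {b | a n < b}) := by
    ext u
    simp [lexLt, eq_comm]
  rw [this]
  refine MeasurableSet.iUnion fun n => MeasurableSet.inter ?_ ?_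
  · exact MeasurableSet.iInter fun m => MeasurableSet.iInter fun _ =>
      measurable_pi_apply m (measurableSet_singleton _)
  · exact measurable_pi_apply n ((Set.toFinite _).measurableSet)

lemma measurableSet_cyl (s : List Bool) : MeasurableSet (cyl s) := by
  have : cyl s = ⋂ i, ⋂ (_ : i < s.length), (fun z : ℕ → Bool => z i) ⁻¹' {s.getD i false} := by
    ext z; simp [cyl]
  rw [this]
  exact MeasurableSet.iInter fun i => MeasurableSet.iInter fun _ =>
    measurable_pi_apply i (measurableSet_singleton _)

lemma measurableSet_Aset (t : SignType) (s : List Bool) : MeasurableSet (Aset t s) := by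
  cases t with
  | neg => exact measurableSet_lexLt_left _
  | zero => exact measurableSet_cyl s
  | pos => exact measurableSet_lexLt_right _

/-- Basic box in the product of Cantor spaces. -/
def box {k : ℕ} (σ : Fin k → List Bool) : Set (Fin k → ℕ → Bool) :=
  {y | ∀ l, y l ∈ cyl (σ l)}

lemma getD_ofFn {n : ℕ} (f : Fin n → Bool) {i : ℕ} (h : i < n) :
    (List.ofFn f).getD i false = f ⟨i, h⟩ := by
  rw [List.getD_eq_getElem (hn := by simpa using h)]
  simp

lemma exists_box {k : ℕ} {O : Set (Fin k → ℕ → Bool)} (hO : IsOpen O) {y : Fin k → ℕ → Bool}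
    (hy : y ∈ O) : ∃ σ : Fin k → List Bool, y ∈ box σ ∧ box σ ⊆ O := by
  classical
  obtain ⟨I, u, hu, hsub⟩ := isOpen_pi_iff.mp hO y hy
  have h2 := fun (l : Fin k) (hl : l ∈ I) => isOpen_pi_iff.mp (hu l hl).1 (y l) (hu l hl).2
  choose J v hv hsub' using h2
  refine ⟨fun l => if h : l ∈ I then List.ofFn (fun i : Fin ((J l h).sup id + 1) => y l i)
    else [], ?_, ?_⟩
  · intro l i hi
    by_cases h : l ∈ I
    · simp only [h, dif_pos] at hi ⊢
      rw [getD_ofFn _ (by simpa using hi)]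
    · simp [h] at hi
  · intro z hz
    apply hsub
    intro l hl'
    have hl : l ∈ I := hl'
    apply hsub' l hl
    intro m hm'
    have hm : m ∈ J l hl := hm'
    have hmN : m < (J l hl).sup id + 1 :=
      Nat.lt_succ_of_le (Finset.le_sup (f := id) hm)
    have hz' : z l ∈ cyl (List.ofFn fun i : Fin ((J l hl).sup id + 1) => y l i) := by
      have := hz l
      simpa only [dif_pos hl] using this
    have hzm : z l m = y l m := by
      have := hz' m (by rw [List.length_ofFn]; exact hmN)
      rwa [getD_ofFn _ hmN] at this
    rw [hzm]
    exact (hv l hl m hm).2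

/-- For any `g ∈ {−1,0,1}^k` and any open `O ⊆ (2^ω)^k`, the set
`{x̄ : ∃ ȳ ∈ O, x̄ R̃_g ȳ}` is Borel. -/
theorem stmt14 {k : ℕ} (g : Fin k → SignType) (O : Set (Fin k → ℕ → Bool))
    (hO : IsOpen O) :
    @MeasurableSet (Fin k → ℕ → Bool) (borel (Fin k → ℕ → Bool))
      {x : Fin k → ℕ → Bool | ∃ y ∈ O, Rtil g x y} := by
  rw [← BorelSpace.measurable_eq (α := Fin k → ℕ → Bool)]
  have hX : {x : Fin k → ℕ → Bool | ∃ y ∈ O, Rtil g x y} =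
      ⋃ (σ : Fin k → List Bool), ⋃ (_ : box σ ⊆ O),
        ⋂ l, (fun x : Fin k → ℕ → Bool => x l) ⁻¹' Aset (g l) (σ l) := by
    ext x
    simp only [Set.mem_setOf_eq, Set.mem_iUnion, Set.mem_iInter, Set.mem_preimage]
    constructor
    · rintro ⟨y, hyO, hR⟩
      obtain ⟨σ, hyb, hbO⟩ := exists_box hO hyO
      exact ⟨σ, hbO, fun l => (mem_Aset_iff _ _ _).2 ⟨y l, hyb l, (Rtil_iff g x y).1 hR l⟩⟩
    · rintro ⟨σ, hbO, hA⟩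
      choose z hz hrel using fun l => (mem_Aset_iff _ _ _).1 (hA l)
      exact ⟨z, hbO hz, (Rtil_iff g x z).2 hrel⟩
  rw [hX]
  exact MeasurableSet.iUnion fun σ => MeasurableSet.iUnion fun _ =>
    MeasurableSet.iInter fun l => measurable_pi_apply l (measurableSet_Aset _ _)
end

section
/- Let ⟨x_n : n ∈ ω⟩ be a sequence of subsets of ω, write x_n^0 = x_n, x_n^1 = ω ∖ x_n, and for g ∈ 2^ω set y_{n,g} = ⋂_{m ≤ n} x_m^{g(m)} and y_g = ⋃_{n∈ω} (y_{n,g} ∩ f(n)) for a fixed f ∈ ω^ω. Then for all g ≠ h in 2^ω, the set y_g ∩ y_h is finite. -/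
/-- `y_{n,g} = ⋂_{m ≤ n} x_m^{g(m)}`, where `x^0 = x` and `x^1 = ω ∖ x`. -/
def yStage (x : ℕ → Set ℕ) (g : ℕ → Bool) (n : ℕ) : Set ℕ :=
  ⋂ m ∈ Finset.range (n + 1), (if g m = true then x m else (x m)ᶜ)

/-- `y_g = ⋃_n (y_{n,g} ∩ [0, f(n)))`. -/
def yDiag (x : ℕ → Set ℕ) (f : ℕ → ℕ) (g : ℕ → Bool) : Set ℕ :=
  ⋃ n : ℕ, yStage x g n ∩ Set.Iio (f n)

lemma yStage_mem_of_le (x : ℕ → Set ℕ) (g : ℕ → Bool) {n m k : ℕ} (hm : m ≤ n)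
    (hk : k ∈ yStage x g n) : k ∈ (if g m = true then x m else (x m)ᶜ) := by
  simp only [yStage, Set.mem_iInter, Finset.mem_range] at hk
  exact hk m (Nat.lt_succ_of_le hm)

/-- For all `g ≠ h` in `2^ω`, the set `y_g ∩ y_h` is finite. -/
theorem stmt19 (x : ℕ → Set ℕ) (f : ℕ → ℕ) (g h : ℕ → Bool) (hgh : g ≠ h) :
    (yDiag x f g ∩ yDiag x f h).Finite := by
  have hex : ∃ m, g m ≠ h m := by
    by_contra hc
    push_neg at hc
    exact hgh (funext hc)
  set n := Nat.find hex with hn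
  have hne : g n ≠ h n := Nat.find_spec hex
  apply Set.Finite.subset (Set.finite_Iio ((Finset.range n).sup f))
  rintro k ⟨hkg, hkh⟩
  simp only [yDiag, Set.mem_iUnion, Set.mem_inter_iff, Set.mem_Iio] at hkg hkh
  obtain ⟨a, hka, hkfa⟩ := hkg
  obtain ⟨b, hkb, hkfb⟩ := hkh
  have key : a < n ∨ b < n := by
    by_contra hc
    push_neg at hc
    have h1 := yStage_mem_of_le x g hc.1 hka
    have h2 := yStage_mem_of_le x h hc.2 hkb
    cases hg : g n <;> cases hh : h n <;> simp [hg, hh] at h1 h2 hne <;> tauto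
  rcases key with hl | hl
  · exact lt_of_lt_of_le hkfa (Finset.le_sup (Finset.mem_range.mpr hl))
  · exact lt_of_lt_of_le hkfb (Finset.le_sup (Finset.mem_range.mpr hl))
end
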